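/- Let Φ = {f₁,…,f_k} be a contracting affine IFS on ℝ^d, let θ be a Borel probability measure on the attractor K such that θ(f_i(K) ∩ f_j(K)) = 0 for all i ≠ j, and such that θ = ∑_i p_i (f_i)_* θ for a probability vector p with all p_i > 0. Then for any Borel set B ⊆ ℝ^d, for θ-a.e. x ∈ B, writing x = cod(i₁, i₂, …) and f^{(n)} = f_{i₁}∘⋯∘f_{i_n}, we have lim_{n→∞} θ(B ∩ f^{(n)}(K)) / θ(f^{(n)}(K)) = 1. -/

import Mathlib

open Filter MeasureTheory

/-- `ifsComp f b n = f (b 0) ∘ f (b 1) ∘ ⋯ ∘ f (b (n-1))`. -/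
def ifsComp {d k : ℕ} (f : Fin k → EuclideanSpace ℝ (Fin d) → EuclideanSpace ℝ (Fin d))
    (b : ℕ → Fin k) : ℕ → EuclideanSpace ℝ (Fin d) → EuclideanSpace ℝ (Fin d)
  | 0 => id
  | (n + 1) => fun x => ifsComp f b n (f (b n) x)

/-- The coding map of the IFS: `cod b = lim_n f_{b₀} ∘ ⋯ ∘ f_{b_{n-1}} (0)`. -/
noncomputable def ifsCod {d k : ℕ}
    (f : Fin k → EuclideanSpace ℝ (Fin d) → EuclideanSpace ℝ (Fin d))
    (b : ℕ → Fin k) : EuclideanSpace ℝ (Fin d) :=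
  limUnder atTop (fun n => ifsComp f b n 0)

namespace IfsAux

variable {d k : ℕ} {ϱ : ℝ} {y : Fin k → EuclideanSpace ℝ (Fin d)}
  {f : Fin k → EuclideanSpace ℝ (Fin d) → EuclideanSpace ℝ (Fin d)}

section Basic
variable (hf : ∀ i x, f i x = ϱ • x + y i)
include hf

lemma dist_f (i : Fin k) (x x' : EuclideanSpace ℝ (Fin d)) :
    dist (f i x) (f i x') = |ϱ| * dist x x' := by
  rw [hf, hf, dist_eq_norm, dist_eq_norm]
  have h : ϱ • x + y i - (ϱ • x' + y i) = ϱ • (x - x') := by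
    rw [smul_sub]; abel
  rw [h, norm_smul, Real.norm_eq_abs]

lemma continuous_f (i : Fin k) : Continuous (f i) := by
  have : f i = fun x => ϱ • x + y i := funext (hf i)
  rw [this]
  exact (continuous_id.const_smul ϱ).add continuous_const

lemma injective_f (hϱ₀ : 0 < |ϱ|) (i : Fin k) : Function.Injective (f i) := by
  intro x x' h
  have := dist_f hf i x x'
  rw [h, dist_self] at this
  have : dist x x' = 0 := by
    rcases mul_eq_zero.1 this.symm with h' | h'
    · exact absurd h' (ne_of_gt hϱ₀)
    · exact h'
  exact dist_eq_zero.1 this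

lemma leftInverse_f (hϱ₀ : 0 < |ϱ|) (i : Fin k) :
    Function.LeftInverse (fun x => ϱ⁻¹ • (x - y i)) (f i) := by
  intro x
  have hϱ : ϱ ≠ 0 := fun h => by simp [h] at hϱ₀
  simp [hf, smul_smul, inv_mul_cancel₀ hϱ]

lemma rightInverse_f (hϱ₀ : 0 < |ϱ|) (i : Fin k) :
    Function.RightInverse (fun x => ϱ⁻¹ • (x - y i)) (f i) := by
  intro x
  have hϱ : ϱ ≠ 0 := fun h => by simp [h] at hϱ₀
  simp [hf, smul_smul, mul_inv_cancel₀ hϱ]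

lemma image_f (hϱ₀ : 0 < |ϱ|) (i : Fin k) (S : Set (EuclideanSpace ℝ (Fin d))) :
    f i '' S = (fun x => ϱ⁻¹ • (x - y i)) ⁻¹' S :=
  congrFun (Set.image_eq_preimage_of_inverse (leftInverse_f hf hϱ₀ i)
    (rightInverse_f hf hϱ₀ i)) S

lemma measurableSet_image_f (hϱ₀ : 0 < |ϱ|) (i : Fin k)
    {S : Set (EuclideanSpace ℝ (Fin d))} (hS : MeasurableSet S) :
    MeasurableSet (f i '' S) := by
  rw [image_f hf hϱ₀]
  exact (((continuous_const : Continuous fun _ : EuclideanSpace ℝ (Fin d) => ϱ⁻¹).smul (continuous_id.sub continuous_const)).measurable) hS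

end Basic

lemma ifsComp_congr {b b' : ℕ → Fin k} {n : ℕ} (h : ∀ j < n, b j = b' j) :
    ifsComp f b n = ifsComp f b' n := by
  induction n with
  | zero => rfl
  | succ n ih =>
    funext x
    show ifsComp f b n (f (b n) x) = ifsComp f b' n (f (b' n) x)
    rw [h n (Nat.lt_succ_self n), ih (fun j hj => h j (hj.trans (Nat.lt_succ_self n)))]

lemma ifsComp_image_succ (b : ℕ → Fin k) (n : ℕ) (S : Set (EuclideanSpace ℝ (Fin d))) :
    ifsComp f b (n + 1) '' S = ifsComp f b n '' (f (b n) '' S) := by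
  rw [← Set.image_comp]; rfl

section WithHf
variable (hf : ∀ i x, f i x = ϱ • x + y i)
include hf

lemma dist_ifsComp (b : ℕ → Fin k) (n : ℕ) (x x' : EuclideanSpace ℝ (Fin d)) :
    dist (ifsComp f b n x) (ifsComp f b n x') = |ϱ| ^ n * dist x x' := by
  induction n generalizing x x' with
  | zero => simp [ifsComp]
  | succ n ih =>
    show dist (ifsComp f b n (f (b n) x)) (ifsComp f b n (f (b n) x'))
        = |ϱ| ^ (n + 1) * dist x x'
    rw [ih, dist_f hf, pow_succ]; ring

lemma continuous_ifsComp (b : ℕ → Fin k) (n : ℕ) : Continuous (ifsComp f b n) := by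
  induction n with
  | zero => exact continuous_id
  | succ n ih => exact ih.comp (continuous_f hf (b n))

lemma injective_ifsComp (hϱ₀ : 0 < |ϱ|) (b : ℕ → Fin k) (n : ℕ) :
    Function.Injective (ifsComp f b n) := by
  induction n with
  | zero => exact fun a b h => h
  | succ n ih => exact fun a c h => injective_f hf hϱ₀ (b n) (ih h)

lemma measurableSet_image_ifsComp (hϱ₀ : 0 < |ϱ|) (b : ℕ → Fin k) (n : ℕ)
    {S : Set (EuclideanSpace ℝ (Fin d))} (hS : MeasurableSet S) :
    MeasurableSet (ifsComp f b n '' S) := by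
  induction n generalizing S hS with
  | zero => simpa [ifsComp] using hS
  | succ n ih =>
    rw [ifsComp_image_succ]
    exact ih (measurableSet_image_f hf hϱ₀ (b n) hS)

/-- Cauchy property of the orbit. -/
lemma cauchySeq_orbit (hϱ₁ : |ϱ| < 1) (b : ℕ → Fin k) :
    CauchySeq (fun n => ifsComp f b n 0) := by
  apply cauchySeq_of_le_geometric (r := |ϱ|) (C := ∑ i, ‖y i‖) hϱ₁
  intro n
  show dist (ifsComp f b n 0) (ifsComp f b (n + 1) 0) ≤ _
  have heq : ifsComp f b (n+1) (0 : EuclideanSpace ℝ (Fin d)) = ifsComp f b n (f (b n) 0) := rfl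
  rw [heq, dist_ifsComp hf, mul_comm]
  gcongr
  have : f (b n) 0 = y (b n) := by simp [hf]
  rw [this, dist_zero_left]
  exact Finset.single_le_sum (f := fun i => ‖y i‖) (fun i _ => norm_nonneg _)
    (Finset.mem_univ (b n))

lemma tendsto_ifsCod (hϱ₁ : |ϱ| < 1) (b : ℕ → Fin k) :
    Tendsto (fun n => ifsComp f b n 0) atTop (nhds (ifsCod f b)) := by
  rcases cauchySeq_tendsto_of_complete (cauchySeq_orbit hf hϱ₁ b) with ⟨L, hL⟩
  rwa [ifsCod, hL.limUnder_eq]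

lemma norm_ifsCod_le (hϱ₁ : |ϱ| < 1) (b : ℕ → Fin k) :
    ‖ifsCod f b‖ ≤ (∑ i, ‖y i‖) / (1 - |ϱ|) := by
  have hu : ∀ n, dist (ifsComp f b n 0) (ifsComp f b (n + 1) 0) ≤ (∑ i, ‖y i‖) * |ϱ| ^ n := by
    intro n
    have heq : ifsComp f b (n+1) (0 : EuclideanSpace ℝ (Fin d)) = ifsComp f b n (f (b n) 0) := rfl
    rw [heq, dist_ifsComp hf, mul_comm]
    gcongr
    have : f (b n) 0 = y (b n) := by simp [hf]
    rw [this, dist_zero_left]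
    exact Finset.single_le_sum (f := fun i => ‖y i‖) (fun i _ => norm_nonneg _)
      (Finset.mem_univ (b n))
  have h0 := dist_le_of_le_geometric_of_tendsto₀ (r := |ϱ|) (C := ∑ i, ‖y i‖) hϱ₁ hu
    (tendsto_ifsCod hf hϱ₁ b)
  simpa [ifsComp, dist_zero_left, dist_comm] using h0

/-- shift relation: `cod b = f^{(n)}_b (cod (shift^n b))`. -/
lemma ifsCod_eq_ifsComp (hϱ₁ : |ϱ| < 1) (b : ℕ → Fin k) (n : ℕ) :
    ifsCod f b = ifsComp f b n (ifsCod f (fun j => b (n + j))) := by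
  set b' : ℕ → Fin k := fun j => b (n + j) with hb'
  have hadd : ∀ m x, ifsComp f b (n + m) x = ifsComp f b n (ifsComp f b' m x) := by
    intro m
    induction m with
    | zero => intro x; rfl
    | succ m ih =>
      intro x
      show ifsComp f b (n + m) (f (b (n + m)) x) = _
      rw [ih (f (b (n+m)) x)]
      rfl
  have h1 : Tendsto (fun m => ifsComp f b (m + n) 0) atTop (nhds (ifsCod f b)) :=
    (tendsto_ifsCod hf hϱ₁ b).comp (tendsto_add_atTop_nat n)
  have h2 : Tendsto (fun m => ifsComp f b n (ifsComp f b' m 0)) atTop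
      (nhds (ifsComp f b n (ifsCod f b'))) :=
    ((continuous_ifsComp hf b n).continuousAt).tendsto.comp (tendsto_ifsCod hf hϱ₁ b')
  have : (fun m => ifsComp f b (m + n) 0) = fun m => ifsComp f b n (ifsComp f b' m 0) :=
    funext fun m => by rw [Nat.add_comm m n]; exact hadd m 0
  rw [this] at h1
  exact tendsto_nhds_unique h1 h2

lemma ifsCod_mem (hϱ₁ : |ϱ| < 1) (b : ℕ → Fin k) (n : ℕ) :
    ifsCod f b ∈ ifsComp f b n '' Set.range (ifsCod f) := by
  rw [ifsCod_eq_ifsComp hf hϱ₁ b n]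
  exact Set.mem_image_of_mem _ (Set.mem_range_self _)

lemma f_ifsCod (hϱ₁ : |ϱ| < 1) (i : Fin k) (b : ℕ → Fin k) :
    f i (ifsCod f b) = ifsCod f (fun j => if j = 0 then i else b (j - 1)) := by
  set c : ℕ → Fin k := fun j => if j = 0 then i else b (j - 1) with hc
  have h1 : ifsCod f c = ifsComp f c 1 (ifsCod f (fun j => c (1 + j))) :=
    ifsCod_eq_ifsComp hf hϱ₁ c 1
  have h2 : (fun j => c (1 + j)) = b := by
    funext j; simp [hc, Nat.add_comm 1 j]
  rw [h2] at h1
  rw [h1]; rfl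

lemma f_image_K_subset (hϱ₁ : |ϱ| < 1) (i : Fin k) :
    f i '' Set.range (ifsCod f) ⊆ Set.range (ifsCod f) := by
  rintro x ⟨z, ⟨b, rfl⟩, rfl⟩
  rw [f_ifsCod hf hϱ₁]
  exact Set.mem_range_self _

lemma K_subset_iUnion (hϱ₁ : |ϱ| < 1) :
    Set.range (ifsCod f) ⊆ ⋃ i, f i '' Set.range (ifsCod f) := by
  rintro x ⟨b, rfl⟩
  have h := ifsCod_eq_ifsComp hf hϱ₁ b 1
  refine Set.mem_iUnion.2 ⟨b 0, ?_⟩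
  rw [h]
  exact Set.mem_image_of_mem _ (Set.mem_range_self _)

lemma iUnion_f_image_K (hϱ₁ : |ϱ| < 1) :
    (⋃ i, f i '' Set.range (ifsCod f)) = Set.range (ifsCod f) :=
  le_antisymm (Set.iUnion_subset fun i => f_image_K_subset hf hϱ₁ i) (K_subset_iUnion hf hϱ₁)

lemma ifsComp_image_K_subset (hϱ₁ : |ϱ| < 1) (b : ℕ → Fin k) (n : ℕ) :
    ifsComp f b n '' Set.range (ifsCod f) ⊆ Set.range (ifsCod f) := by
  induction n with
  | zero => simp [ifsComp]
  | succ n ih =>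
    rw [ifsComp_image_succ]
    exact (Set.image_mono (f_image_K_subset hf hϱ₁ (b n))).trans ih

/-- continuity of the coding map. -/
lemma continuous_ifsCod (hϱ₀ : 0 < |ϱ|) (hϱ₁ : |ϱ| < 1) : Continuous (ifsCod f) := by
  set R : ℝ := (∑ i, ‖y i‖) / (1 - |ϱ|) with hR
  rw [continuous_iff_continuousAt]
  intro b
  rw [ContinuousAt, Metric.tendsto_nhds]
  intro ε hε
  have hR0 : (0:ℝ) ≤ R := div_nonneg (Finset.sum_nonneg fun i _ => norm_nonneg _)
    (by linarith)
  obtain ⟨n, hn⟩ : ∃ n, |ϱ| ^ n * (2 * R) < ε := by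
    rcases eq_or_lt_of_le (by linarith : (0:ℝ) ≤ 2 * R) with h | h
    · exact ⟨0, by rw [← h]; simpa using hε⟩
    · have := tendsto_pow_atTop_nhds_zero_of_lt_one (le_of_lt hϱ₀) hϱ₁
      have h2 := this.eventually (eventually_lt_nhds (by positivity : (0:ℝ) < ε / (2 * R)))
      rcases h2.exists with ⟨n, hn⟩
      exact ⟨n, by rwa [← lt_div_iff₀ h]⟩
  have hmem : {b' : ℕ → Fin k | ∀ j < n, b' j = b j} ∈ nhds b := by
    have : {b' : ℕ → Fin k | ∀ j < n, b' j = b j}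
        = ⋂ j ∈ Finset.range n, (fun b' : ℕ → Fin k => b' j) ⁻¹' {b j} := by
      ext b'; simp [Set.mem_iInter]
    rw [this]
    exact (Filter.biInter_finset_mem _).2 fun j _ =>
      (continuous_apply j).continuousAt.preimage_mem_nhds (by simp)
  filter_upwards [hmem] with b' hb'
  have h1 : ifsCod f b' = ifsComp f b' n (ifsCod f (fun j => b' (n + j))) :=
    ifsCod_eq_ifsComp hf hϱ₁ b' n
  have h2 : ifsCod f b = ifsComp f b n (ifsCod f (fun j => b (n + j))) :=
    ifsCod_eq_ifsComp hf hϱ₁ b n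
  have hcongr : ifsComp f b' n = ifsComp f b n := ifsComp_congr hb'
  rw [h1, h2, hcongr, dist_ifsComp hf]
  calc |ϱ| ^ n * dist (ifsCod f (fun j => b' (n + j))) (ifsCod f (fun j => b (n + j)))
      ≤ |ϱ| ^ n * (2 * R) := by
        gcongr
        have hx := norm_ifsCod_le hf hϱ₁ (fun j => b' (n + j))
        have hy' := norm_ifsCod_le hf hϱ₁ (fun j => b (n + j))
        calc dist _ _ ≤ ‖ifsCod f (fun j => b' (n + j))‖ + ‖ifsCod f (fun j => b (n + j))‖ :=
              dist_le_norm_add_norm _ _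
          _ ≤ R + R := add_le_add hx hy'
          _ = 2 * R := by ring
    _ < ε := hn

lemma isCompact_K (hϱ₀ : 0 < |ϱ|) (hϱ₁ : |ϱ| < 1) :
    IsCompact (Set.range (ifsCod f)) :=
  isCompact_range (continuous_ifsCod hf hϱ₀ hϱ₁)

lemma measurableSet_K (hϱ₀ : 0 < |ϱ|) (hϱ₁ : |ϱ| < 1) :
    MeasurableSet (Set.range (ifsCod f)) :=
  (isCompact_K hf hϱ₀ hϱ₁).isClosed.measurableSet

/-- diameter bound for cylinders. -/
lemma dist_le_in_cyl (hϱ₁ : |ϱ| < 1) (b : ℕ → Fin k) (n : ℕ)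
    {z z' : EuclideanSpace ℝ (Fin d)}
    (hz : z ∈ ifsComp f b n '' Set.range (ifsCod f))
    (hz' : z' ∈ ifsComp f b n '' Set.range (ifsCod f)) :
    dist z z' ≤ |ϱ| ^ n * (2 * ((∑ i, ‖y i‖) / (1 - |ϱ|))) := by
  rcases hz with ⟨u, hu, rfl⟩
  rcases hz' with ⟨v, hv, rfl⟩
  rw [dist_ifsComp hf]
  gcongr
  rcases hu with ⟨b1, rfl⟩
  rcases hv with ⟨b2, rfl⟩
  calc dist (ifsCod f b1) (ifsCod f b2) ≤ ‖ifsCod f b1‖ + ‖ifsCod f b2‖ :=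
        dist_le_norm_add_norm _ _
    _ ≤ _ + _ := add_le_add (norm_ifsCod_le hf hϱ₁ b1) (norm_ifsCod_le hf hϱ₁ b2)
    _ = 2 * ((∑ i, ‖y i‖) / (1 - |ϱ|)) := by ring

end WithHf

end IfsAux

namespace IfsAux

variable {d k : ℕ} {ϱ : ℝ} {y : Fin k → EuclideanSpace ℝ (Fin d)}
  {f : Fin k → EuclideanSpace ℝ (Fin d) → EuclideanSpace ℝ (Fin d)}

section Words
variable [Nonempty (Fin k)]

/-- extend a finite word to an infinite one. -/
noncomputable def wext {n : ℕ} (w : Fin n → Fin k) : ℕ → Fin k :=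
  fun j => if h : j < n then w ⟨j, h⟩ else Classical.arbitrary _

/-- append a letter at the end of a finite word. -/
def snocw {n : ℕ} (w : Fin n → Fin k) (i : Fin k) : Fin (n + 1) → Fin k :=
  fun j => if h : (j : ℕ) < n then w ⟨j, h⟩ else i

/-- the cylinder set of a finite word. -/
def cyl (f : Fin k → EuclideanSpace ℝ (Fin d) → EuclideanSpace ℝ (Fin d))
    (n : ℕ) (w : Fin n → Fin k) : Set (EuclideanSpace ℝ (Fin d)) :=
  ifsComp f (wext w) n '' Set.range (ifsCod f)

lemma ifsComp_wext (b : ℕ → Fin k) (n : ℕ) :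
    ifsComp f (wext (fun j : Fin n => b j)) n = ifsComp f b n :=
  ifsComp_congr fun j hj => by simp [wext, hj]

lemma cyl_eq (b : ℕ → Fin k) (n : ℕ) :
    ifsComp f b n '' Set.range (ifsCod f) = cyl f n (fun j : Fin n => b j) := by
  rw [cyl, ifsComp_wext]

section WithHf
variable (hf : ∀ i x, f i x = ϱ • x + y i)
include hf

lemma cyl_subset_K (hϱ₁ : |ϱ| < 1) (n : ℕ) (w : Fin n → Fin k) :
    cyl f n w ⊆ Set.range (ifsCod f) :=
  ifsComp_image_K_subset hf hϱ₁ _ n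

lemma measurableSet_cyl (hϱ₀ : 0 < |ϱ|) (hϱ₁ : |ϱ| < 1) (n : ℕ) (w : Fin n → Fin k) :
    MeasurableSet (cyl f n w) :=
  measurableSet_image_ifsComp hf hϱ₀ _ n (measurableSet_K hf hϱ₀ hϱ₁)

lemma mem_cyl_of_cod (hϱ₁ : |ϱ| < 1) (b : ℕ → Fin k) (n : ℕ) :
    ifsCod f b ∈ cyl f n (fun j : Fin n => b j) := by
  rw [← cyl_eq]
  exact ifsCod_mem hf hϱ₁ b n

lemma K_subset_iUnion_cyl (hϱ₁ : |ϱ| < 1) (n : ℕ) :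
    Set.range (ifsCod f) ⊆ ⋃ w : Fin n → Fin k, cyl f n w := by
  rintro x ⟨b, rfl⟩
  exact Set.mem_iUnion.2 ⟨fun j : Fin n => b j, mem_cyl_of_cod hf hϱ₁ b n⟩

lemma cyl_succ (hϱ₁ : |ϱ| < 1) (n : ℕ) (w : Fin n → Fin k) :
    cyl f n w = ⋃ i, cyl f (n + 1) (snocw w i) := by
  have hcomp : ∀ i, ifsComp f (wext (snocw w i)) (n + 1)
      = ifsComp f (wext w) n ∘ f i := by
    intro i
    funext x
    show ifsComp f (wext (snocw w i)) n (f (wext (snocw w i) n) x) = _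
    have h1 : wext (snocw w i) n = i := by
      simp [wext, snocw, Nat.lt_succ_self]
    have h2 : ifsComp f (wext (snocw w i)) n = ifsComp f (wext w) n :=
      ifsComp_congr fun j hj => by
        simp [wext, snocw, hj, Nat.lt_succ_of_lt hj]
    rw [h1, h2]
    rfl
  calc cyl f n w = ifsComp f (wext w) n '' Set.range (ifsCod f) := rfl
    _ = ifsComp f (wext w) n '' (⋃ i, f i '' Set.range (ifsCod f)) := by
        rw [iUnion_f_image_K hf hϱ₁]
    _ = ⋃ i, ifsComp f (wext w) n '' (f i '' Set.range (ifsCod f)) := Set.image_iUnion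
    _ = ⋃ i, cyl f (n + 1) (snocw w i) := by
        refine Set.iUnion_congr fun i => ?_
        rw [cyl, hcomp i, Set.image_comp]

end WithHf

/-- points belonging to two distinct cylinders of some level, together with `Kᶜ`. -/
def overlapSet (f : Fin k → EuclideanSpace ℝ (Fin d) → EuclideanSpace ℝ (Fin d)) :
    Set (EuclideanSpace ℝ (Fin d)) :=
  ⋃ i, ⋃ j, ⋃ (_ : i ≠ j),
    (f i '' Set.range (ifsCod f) ∩ f j '' Set.range (ifsCod f))

def badSet (f : Fin k → EuclideanSpace ℝ (Fin d) → EuclideanSpace ℝ (Fin d)) :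
    Set (EuclideanSpace ℝ (Fin d)) :=
  (Set.range (ifsCod f))ᶜ ∪
    ⋃ (n : ℕ), ⋃ (w : Fin n → Fin k), ifsComp f (wext w) n '' overlapSet f

section WithHf2
variable (hf : ∀ i x, f i x = ϱ • x + y i)
include hf

lemma measurableSet_overlapSet (hϱ₀ : 0 < |ϱ|) (hϱ₁ : |ϱ| < 1) :
    MeasurableSet (overlapSet f) := by
  refine MeasurableSet.iUnion fun i => MeasurableSet.iUnion fun j =>
    MeasurableSet.iUnion fun _ => ?_
  exact (measurableSet_image_f hf hϱ₀ i (measurableSet_K hf hϱ₀ hϱ₁)).inter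
    (measurableSet_image_f hf hϱ₀ j (measurableSet_K hf hϱ₀ hϱ₁))

lemma overlapSet_subset_K (hϱ₁ : |ϱ| < 1) :
    overlapSet f ⊆ Set.range (ifsCod f) := by
  refine Set.iUnion_subset fun i => Set.iUnion_subset fun j => Set.iUnion_subset fun _ => ?_
  exact (Set.inter_subset_left).trans (f_image_K_subset hf hϱ₁ i)

/-- uniqueness of coding prefixes outside the bad set. -/
lemma coding_unique (hϱ₀ : 0 < |ϱ|) (hϱ₁ : |ϱ| < 1)
    {x : EuclideanSpace ℝ (Fin d)} (hx : x ∉ badSet f) (b b' : ℕ → Fin k) :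
    ∀ n, x ∈ ifsComp f b n '' Set.range (ifsCod f) →
      x ∈ ifsComp f b' n '' Set.range (ifsCod f) → ∀ j < n, b j = b' j := by
  intro n
  induction n with
  | zero => exact fun _ _ j hj => absurd hj (Nat.not_lt_zero j)
  | succ n ih =>
    intro hb hb' j hj
    rw [ifsComp_image_succ] at hb hb'
    have hbn : x ∈ ifsComp f b n '' Set.range (ifsCod f) :=
      Set.image_mono (f_image_K_subset hf hϱ₁ _) hb
    have hb'n : x ∈ ifsComp f b' n '' Set.range (ifsCod f) :=
      Set.image_mono (f_image_K_subset hf hϱ₁ _) hb'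
    have hagree := ih hbn hb'n
    rcases Nat.lt_succ_iff_lt_or_eq.1 hj with hj' | rfl
    · exact hagree j hj'
    · by_contra hne
      rcases hb with ⟨z, hz, hxz⟩
      rcases hb' with ⟨z', hz', hxz'⟩
      have hcongr : ifsComp f b' j = ifsComp f b j :=
        ifsComp_congr fun m hm => (hagree m hm).symm
      rw [hcongr] at hxz'
      have hzz : z = z' := injective_ifsComp hf hϱ₀ b j (hxz.trans hxz'.symm)
      have hzO : z ∈ overlapSet f := by
        refine Set.mem_iUnion.2 ⟨b j, Set.mem_iUnion.2 ⟨b' j, Set.mem_iUnion.2 ⟨hne, ?_⟩⟩⟩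
        exact ⟨hz, hzz ▸ hz'⟩
      apply hx
      refine Or.inr (Set.mem_iUnion.2 ⟨j, Set.mem_iUnion.2 ⟨fun m : Fin j => b m, ?_⟩⟩)
      rw [ifsComp_wext]
      exact ⟨z, hzO, hxz⟩

lemma Kc_subset_badSet : (Set.range (ifsCod f))ᶜ ⊆ badSet f := Set.subset_union_left

lemma cyl_inter_subset_badSet (hϱ₀ : 0 < |ϱ|) (hϱ₁ : |ϱ| < 1)
    {n : ℕ} {w w' : Fin n → Fin k} (hne : w ≠ w') :
    cyl f n w ∩ cyl f n w' ⊆ badSet f := by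
  intro x ⟨h1, h2⟩
  by_contra hx
  apply hne
  have hagree := coding_unique hf hϱ₀ hϱ₁ hx (wext w) (wext w') n h1 h2
  funext i
  have := hagree i i.isLt
  simpa [wext] using this

end WithHf2

end Words

end IfsAux

namespace IfsAux

variable {d k : ℕ} {ϱ : ℝ} {y : Fin k → EuclideanSpace ℝ (Fin d)}
  {f : Fin k → EuclideanSpace ℝ (Fin d) → EuclideanSpace ℝ (Fin d)}
  {θ : Measure (EuclideanSpace ℝ (Fin d))} [IsProbabilityMeasure θ]
  {p : Fin k → ENNReal}

section MeasureLemmas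
variable (hf : ∀ i x, f i x = ϱ • x + y i)
include hf

lemma measure_eq_sum (hss : θ = ∑ i : Fin k, p i • θ.map (f i))
    {s : Set (EuclideanSpace ℝ (Fin d))} (hs : MeasurableSet s) :
    θ s = ∑ j, p j * θ (f j ⁻¹' s) := by
  conv_lhs => rw [hss]
  rw [Measure.finset_sum_apply]
  refine Finset.sum_congr rfl fun j _ => ?_
  rw [Measure.smul_apply, smul_eq_mul,
    Measure.map_apply (continuous_f hf j).measurable hs]

lemma measure_preimage_le (hss : θ = ∑ i : Fin k, p i • θ.map (f i)) (i : Fin k)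
    {s : Set (EuclideanSpace ℝ (Fin d))} (hs : MeasurableSet s) :
    p i * θ (f i ⁻¹' s) ≤ θ s := by
  rw [measure_eq_sum hf hss hs]
  exact Finset.single_le_sum (f := fun j => p j * θ (f j ⁻¹' s))
    (fun j _ => zero_le) (Finset.mem_univ i)

lemma measure_image_f_ge (hss : θ = ∑ i : Fin k, p i • θ.map (f i)) (hϱ₀ : 0 < |ϱ|)
    (i : Fin k) {S : Set (EuclideanSpace ℝ (Fin d))} (hS : MeasurableSet S) :
    p i * θ S ≤ θ (f i '' S) := by
  have h := measure_preimage_le hf hss i (measurableSet_image_f hf hϱ₀ i hS)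
  rwa [Set.preimage_image_eq S (injective_f hf hϱ₀ i)] at h

lemma measure_ifsComp_image_pos (hss : θ = ∑ i : Fin k, p i • θ.map (f i))
    (hϱ₀ : 0 < |ϱ|) (hppos : ∀ i, 0 < p i) (b : ℕ → Fin k) (n : ℕ)
    {S : Set (EuclideanSpace ℝ (Fin d))} (hS : MeasurableSet S) (hpos : 0 < θ S) :
    0 < θ (ifsComp f b n '' S) := by
  induction n generalizing S with
  | zero => simpa [ifsComp] using hpos
  | succ n ih =>
    rw [ifsComp_image_succ]
    refine ih (measurableSet_image_f hf hϱ₀ (b n) hS) ?_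
    calc (0 : ENNReal) < p (b n) * θ S :=
          ENNReal.mul_pos (ne_of_gt (hppos _)) (ne_of_gt hpos)
      _ ≤ θ (f (b n) '' S) := measure_image_f_ge hf hss hϱ₀ (b n) hS

lemma measure_K_eq_one (hϱ₀ : 0 < |ϱ|) (hϱ₁ : |ϱ| < 1)
    (hsupp : θ (Set.range (ifsCod f))ᶜ = 0) : θ (Set.range (ifsCod f)) = 1 :=
  (prob_compl_eq_zero_iff (measurableSet_K hf hϱ₀ hϱ₁)).1 hsupp

lemma null_image_f (hϱ₀ : 0 < |ϱ|) (hϱ₁ : |ϱ| < 1)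
    (hsupp : θ (Set.range (ifsCod f))ᶜ = 0)
    (hss : θ = ∑ i : Fin k, p i • θ.map (f i)) (hppos : ∀ i, 0 < p i)
    (hdisj : ∀ i j : Fin k, i ≠ j →
      θ (f i '' Set.range (ifsCod f) ∩ f j '' Set.range (ifsCod f)) = 0)
    {N : Set (EuclideanSpace ℝ (Fin d))} (hN : MeasurableSet N)
    (hNK : N ⊆ Set.range (ifsCod f)) (hnull : θ N = 0) (i : Fin k) :
    θ (f i '' N) = 0 := by
  have hKmeas := measurableSet_K hf hϱ₀ hϱ₁
  have himN : MeasurableSet (f i '' N) := measurableSet_image_f hf hϱ₀ i hN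
  rw [measure_eq_sum hf hss himN]
  refine Finset.sum_eq_zero fun j _ => ?_
  by_cases hji : j = i
  · subst hji
    rw [Set.preimage_image_eq N (injective_f hf hϱ₀ j), hnull, mul_zero]
  · have hover : MeasurableSet
        (f i '' Set.range (ifsCod f) ∩ f j '' Set.range (ifsCod f)) :=
      (measurableSet_image_f hf hϱ₀ i hKmeas).inter
        (measurableSet_image_f hf hϱ₀ j hKmeas)
    have h1 : θ (f j ⁻¹' (f i '' Set.range (ifsCod f) ∩ f j '' Set.range (ifsCod f))) = 0 := by
      have hle := measure_preimage_le hf hss j hover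
      rw [hdisj i j (fun h => hji h.symm)] at hle
      have := le_antisymm hle zero_le
      exact (mul_eq_zero.1 this).resolve_left (ne_of_gt (hppos j))
    have hsub : f j ⁻¹' (f i '' N)
        ⊆ (f j ⁻¹' (f i '' Set.range (ifsCod f) ∩ f j '' Set.range (ifsCod f)))
          ∪ (Set.range (ifsCod f))ᶜ := by
      intro x hx
      by_cases hxK : x ∈ Set.range (ifsCod f)
      · exact Or.inl ⟨Set.image_mono hNK hx, Set.mem_image_of_mem _ hxK⟩
      · exact Or.inr hxK
    have h2 : θ (f j ⁻¹' (f i '' N)) = 0 := by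
      refine le_antisymm ?_ zero_le
      calc θ (f j ⁻¹' (f i '' N)) ≤ _ := measure_mono hsub
        _ ≤ θ (f j ⁻¹' (f i '' Set.range (ifsCod f) ∩ f j '' Set.range (ifsCod f)))
            + θ (Set.range (ifsCod f))ᶜ := measure_union_le _ _
        _ = 0 := by rw [h1, hsupp, add_zero]
    rw [h2, mul_zero]

lemma null_image_ifsComp (hϱ₀ : 0 < |ϱ|) (hϱ₁ : |ϱ| < 1)
    (hsupp : θ (Set.range (ifsCod f))ᶜ = 0)
    (hss : θ = ∑ i : Fin k, p i • θ.map (f i)) (hppos : ∀ i, 0 < p i)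
    (hdisj : ∀ i j : Fin k, i ≠ j →
      θ (f i '' Set.range (ifsCod f) ∩ f j '' Set.range (ifsCod f)) = 0)
    (b : ℕ → Fin k) (n : ℕ)
    {N : Set (EuclideanSpace ℝ (Fin d))} (hN : MeasurableSet N)
    (hNK : N ⊆ Set.range (ifsCod f)) (hnull : θ N = 0) :
    θ (ifsComp f b n '' N) = 0 := by
  induction n generalizing N with
  | zero => simpa [ifsComp] using hnull
  | succ n ih =>
    rw [ifsComp_image_succ]
    exact ih (measurableSet_image_f hf hϱ₀ (b n) hN)
      ((Set.image_mono hNK).trans (f_image_K_subset hf hϱ₁ _))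
      (null_image_f hf hϱ₀ hϱ₁ hsupp hss hppos hdisj hN hNK hnull (b n))

lemma measure_overlapSet (hϱ₀ : 0 < |ϱ|)
    (hdisj : ∀ i j : Fin k, i ≠ j →
      θ (f i '' Set.range (ifsCod f) ∩ f j '' Set.range (ifsCod f)) = 0) :
    θ (overlapSet f) = 0 :=
  measure_iUnion_null fun i => measure_iUnion_null fun j =>
    measure_iUnion_null fun hij => hdisj i j hij

lemma measure_badSet [Nonempty (Fin k)] (hϱ₀ : 0 < |ϱ|) (hϱ₁ : |ϱ| < 1)
    (hsupp : θ (Set.range (ifsCod f))ᶜ = 0)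
    (hss : θ = ∑ i : Fin k, p i • θ.map (f i)) (hppos : ∀ i, 0 < p i)
    (hdisj : ∀ i j : Fin k, i ≠ j →
      θ (f i '' Set.range (ifsCod f) ∩ f j '' Set.range (ifsCod f)) = 0) :
    θ (badSet f) = 0 := by
  refine measure_union_null hsupp (measure_iUnion_null fun n => measure_iUnion_null fun w => ?_)
  exact null_image_ifsComp hf hϱ₀ hϱ₁ hsupp hss hppos hdisj (wext w) n
    (measurableSet_overlapSet hf hϱ₀ hϱ₁) (overlapSet_subset_K hf hϱ₁)
    (measure_overlapSet hf hϱ₀ hdisj)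

lemma cyl_inter_null [Nonempty (Fin k)] (hϱ₀ : 0 < |ϱ|) (hϱ₁ : |ϱ| < 1)
    (hsupp : θ (Set.range (ifsCod f))ᶜ = 0)
    (hss : θ = ∑ i : Fin k, p i • θ.map (f i)) (hppos : ∀ i, 0 < p i)
    (hdisj : ∀ i j : Fin k, i ≠ j →
      θ (f i '' Set.range (ifsCod f) ∩ f j '' Set.range (ifsCod f)) = 0)
    {n : ℕ} {w w' : Fin n → Fin k} (hne : w ≠ w') :
    θ (cyl f n w ∩ cyl f n w') = 0 :=
  le_antisymm
    ((measure_mono (cyl_inter_subset_badSet hf hϱ₀ hϱ₁ hne)).trans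
      (measure_badSet hf hϱ₀ hϱ₁ hsupp hss hppos hdisj).le)
    zero_le

lemma measure_cyl_pos [Nonempty (Fin k)] (hϱ₀ : 0 < |ϱ|) (hϱ₁ : |ϱ| < 1)
    (hsupp : θ (Set.range (ifsCod f))ᶜ = 0)
    (hss : θ = ∑ i : Fin k, p i • θ.map (f i)) (hppos : ∀ i, 0 < p i)
    (n : ℕ) (w : Fin n → Fin k) : 0 < θ (cyl f n w) :=
  measure_ifsComp_image_pos hf hss hϱ₀ hppos (wext w) n
    (measurableSet_K hf hϱ₀ hϱ₁)
    (by rw [measure_K_eq_one hf hϱ₀ hϱ₁ hsupp]; exact one_pos)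

end MeasureLemmas

end IfsAux

namespace IfsAux

variable {d k : ℕ} {ϱ : ℝ} {y : Fin k → EuclideanSpace ℝ (Fin d)}
  {f : Fin k → EuclideanSpace ℝ (Fin d) → EuclideanSpace ℝ (Fin d)}
  {θ : Measure (EuclideanSpace ℝ (Fin d))} [IsProbabilityMeasure θ]
  {p : Fin k → ENNReal}

lemma exists_pow_mul_lt (hϱ₁ : |ϱ| < 1) {c ε : ℝ} (hc : 0 ≤ c) (hε : 0 < ε) :
    ∃ n : ℕ, |ϱ| ^ n * c < ε := by
  rcases eq_or_lt_of_le hc with h | h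
  · exact ⟨0, by rw [← h]; simpa using hε⟩
  · have htd := tendsto_pow_atTop_nhds_zero_of_lt_one (abs_nonneg ϱ) hϱ₁
    rcases (htd.eventually_lt_const (div_pos hε h)).exists with ⟨n, hn⟩
    exact ⟨n, by rwa [← lt_div_iff₀ h]⟩

section Trace
variable [Nonempty (Fin k)]
variable (hf : ∀ i x, f i x = ϱ • x + y i) (hϱ₀ : 0 < |ϱ|) (hϱ₁ : |ϱ| < 1)
include hf hϱ₀ hϱ₁

lemma K_mem_iSup :
    MeasurableSet[⨆ n, MeasurableSpace.generateFrom (Set.range (cyl f n))]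
      (Set.range (ifsCod f)) := by
  have h0 : cyl f 0 (fun i : Fin 0 => i.elim0) = Set.range (ifsCod f) := by
    simp [cyl, ifsComp]
  exact (le_iSup (fun n => MeasurableSpace.generateFrom (Set.range (cyl f n))) 0) _
    (MeasurableSpace.measurableSet_generateFrom ⟨_, h0⟩)

lemma open_inter_K_mem {U : Set (EuclideanSpace ℝ (Fin d))} (hU : IsOpen U) :
    MeasurableSet[⨆ n, MeasurableSpace.generateFrom (Set.range (cyl f n))]
      (U ∩ Set.range (ifsCod f)) := by
  have hrep : U ∩ Set.range (ifsCod f)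
      = ⋃ n, ⋃ w : Fin n → Fin k, ⋃ (_ : cyl f n w ⊆ U), cyl f n w := by
    apply Set.Subset.antisymm
    · rintro x ⟨hxU, b, rfl⟩
      rcases Metric.isOpen_iff.1 hU _ hxU with ⟨ε, hε, hball⟩
      have hR0 : (0:ℝ) ≤ 2 * ((∑ i, ‖y i‖) / (1 - |ϱ|)) := by
        have : (0:ℝ) ≤ (∑ i, ‖y i‖) / (1 - |ϱ|) :=
          div_nonneg (Finset.sum_nonneg fun i _ => norm_nonneg _) (by linarith)
        linarith
      obtain ⟨n, hn⟩ := exists_pow_mul_lt hϱ₁ hR0 hε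
      refine Set.mem_iUnion.2 ⟨n, Set.mem_iUnion.2 ⟨fun j : Fin n => b j,
        Set.mem_iUnion.2 ⟨?_, mem_cyl_of_cod hf hϱ₁ b n⟩⟩⟩
      intro z hz
      apply hball
      rw [Metric.mem_ball]
      have hz' : z ∈ ifsComp f b n '' Set.range (ifsCod f) := by
        rw [cyl_eq]; exact hz
      calc dist z (ifsCod f b) ≤ |ϱ| ^ n * (2 * ((∑ i, ‖y i‖) / (1 - |ϱ|))) :=
            dist_le_in_cyl hf hϱ₁ b n hz' (ifsCod_mem hf hϱ₁ b n)
        _ < ε := hn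
    · intro x hx
      simp only [Set.mem_iUnion] at hx
      obtain ⟨n, w, hsub, hxw⟩ := hx
      exact ⟨hsub hxw, cyl_subset_K hf hϱ₁ n w hxw⟩
  rw [hrep]
  refine MeasurableSet.iUnion fun n => MeasurableSet.iUnion fun w =>
    MeasurableSet.iUnion fun _ => ?_
  exact (le_iSup (fun n => MeasurableSpace.generateFrom (Set.range (cyl f n))) n) _
    (MeasurableSpace.measurableSet_generateFrom ⟨w, rfl⟩)

lemma inter_K_mem {S : Set (EuclideanSpace ℝ (Fin d))} (hS : MeasurableSet S) :
    MeasurableSet[⨆ n, MeasurableSpace.generateFrom (Set.range (cyl f n))]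
      (S ∩ Set.range (ifsCod f)) := by
  have hS' : MeasurableSet[MeasurableSpace.generateFrom
      {s : Set (EuclideanSpace ℝ (Fin d)) | IsOpen s}] S := by
    have hbe : (inferInstance : MeasurableSpace (EuclideanSpace ℝ (Fin d)))
        = MeasurableSpace.generateFrom {s : Set (EuclideanSpace ℝ (Fin d)) | IsOpen s} :=
      BorelSpace.measurable_eq
    have hcast := congrArg
      (fun m : MeasurableSpace (EuclideanSpace ℝ (Fin d)) => MeasurableSet[m] S) hbe
    exact hcast.mp hS
  refine MeasurableSpace.generateFrom_induction
    (C := {s : Set (EuclideanSpace ℝ (Fin d)) | IsOpen s})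
    (p := fun s _ => MeasurableSet[⨆ n, MeasurableSpace.generateFrom (Set.range (cyl f n))]
      (s ∩ Set.range (ifsCod f))) ?_ ?_ ?_ ?_ S hS'
  · intro t ht _
    exact open_inter_K_mem hf hϱ₀ hϱ₁ ht
  · show MeasurableSet[⨆ n, MeasurableSpace.generateFrom (Set.range (cyl f n))]
      ((∅ : Set (EuclideanSpace ℝ (Fin d))) ∩ Set.range (ifsCod f))
    rw [Set.empty_inter]
    exact @MeasurableSet.empty _
      (⨆ n, MeasurableSpace.generateFrom (Set.range (cyl f n)))
  · intro t _ ih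
    show MeasurableSet[⨆ n, MeasurableSpace.generateFrom (Set.range (cyl f n))]
      (tᶜ ∩ Set.range (ifsCod f))
    have heq : tᶜ ∩ Set.range (ifsCod f)
        = Set.range (ifsCod f) \ (t ∩ Set.range (ifsCod f)) := by
      ext x; simp only [Set.mem_inter_iff, Set.mem_compl_iff, Set.mem_diff]; tauto
    rw [heq]
    exact (K_mem_iSup hf hϱ₀ hϱ₁).diff ih
  · intro s' _ ih
    show MeasurableSet[⨆ n, MeasurableSpace.generateFrom (Set.range (cyl f n))]
      ((⋃ i, s' i) ∩ Set.range (ifsCod f))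
    rw [Set.iUnion_inter]
    exact MeasurableSet.iUnion ih

end Trace

section AEUnion
variable [Nonempty (Fin k)]
variable (hf : ∀ i x, f i x = ϱ • x + y i) (hϱ₀ : 0 < |ϱ|) (hϱ₁ : |ϱ| < 1)
  (hsupp : θ (Set.range (ifsCod f))ᶜ = 0)
  (hss : θ = ∑ i : Fin k, p i • θ.map (f i)) (hppos : ∀ i, 0 < p i)
  (hdisj : ∀ i j : Fin k, i ≠ j →
    θ (f i '' Set.range (ifsCod f) ∩ f j '' Set.range (ifsCod f)) = 0)
include hf hϱ₀ hϱ₁ hsupp hss hppos hdisj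

lemma compl_biUnion_cyl_ae (n : ℕ) (T : Finset (Fin n → Fin k)) :
    (⋃ w ∈ T, cyl f n w)ᶜ =ᵐ[θ] ⋃ w ∈ Tᶜ, cyl f n w := by
  have hbad := measure_badSet hf hϱ₀ hϱ₁ hsupp hss hppos hdisj
  refine Filter.eventuallyEq_set.2 ?_
  filter_upwards [compl_mem_ae_iff.2 hbad] with x hx
  have hxK : x ∈ Set.range (ifsCod f) := by
    by_contra h; exact hx (Or.inl h)
  obtain ⟨b, hb⟩ := hxK
  have hxw0 : x ∈ cyl f n (fun j : Fin n => b j) := hb ▸ mem_cyl_of_cod hf hϱ₁ b n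
  have huniq : ∀ w : Fin n → Fin k, x ∈ cyl f n w → w = fun j : Fin n => b j := by
    intro w hw
    have hagree := coding_unique hf hϱ₀ hϱ₁ hx (wext w) b n hw
      (hb ▸ ifsCod_mem hf hϱ₁ b n)
    funext i
    have := hagree i i.isLt
    simpa [wext] using this
  show x ∈ (⋃ w ∈ T, cyl f n w)ᶜ ↔ x ∈ ⋃ w ∈ Tᶜ, cyl f n w
  rw [Set.mem_compl_iff]
  constructor
  · intro hnot
    refine Set.mem_iUnion₂.2 ⟨fun j : Fin n => b j, Finset.mem_compl.2 ?_, hxw0⟩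
    intro hmem
    exact hnot (Set.mem_iUnion₂.2 ⟨_, hmem, hxw0⟩)
  · intro hmem hmem'
    obtain ⟨w, hwTc, hxw⟩ := Set.mem_iUnion₂.1 hmem
    obtain ⟨w', hw'T, hxw'⟩ := Set.mem_iUnion₂.1 hmem'
    rw [huniq w hxw] at hwTc
    rw [huniq w' hxw'] at hw'T
    exact (Finset.mem_compl.1 hwTc) hw'T

lemma union_cyl_of_measurableSet (n : ℕ) {s : Set (EuclideanSpace ℝ (Fin d))}
    (hs : MeasurableSet[MeasurableSpace.generateFrom (Set.range (cyl f n))] s) :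
    ∃ T : Finset (Fin n → Fin k), s =ᵐ[θ] ⋃ w ∈ T, cyl f n w := by
  classical
  refine MeasurableSpace.generateFrom_induction (C := Set.range (cyl f n))
    (p := fun s _ => ∃ T : Finset (Fin n → Fin k), s =ᵐ[θ] ⋃ w ∈ T, cyl f n w)
    ?_ ?_ ?_ ?_ s hs
  · rintro t ⟨w, rfl⟩ _
    refine ⟨{w}, ?_⟩
    show cyl f n w =ᵐ[θ] ⋃ w' ∈ ({w} : Finset (Fin n → Fin k)), cyl f n w'
    rw [Finset.set_biUnion_singleton]
    exact EventuallyEq.rfl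
  · refine ⟨∅, ?_⟩
    show (∅ : Set (EuclideanSpace ℝ (Fin d))) =ᵐ[θ] ⋃ w ∈ (∅ : Finset (Fin n → Fin k)), cyl f n w
    have he : (⋃ w ∈ (∅ : Finset (Fin n → Fin k)), cyl f n w) = ∅ := by simp
    rw [he]
    exact EventuallyEq.rfl
  · rintro t _ hp
    obtain ⟨T, hT⟩ := hp
    exact ⟨Tᶜ, hT.compl.trans
      (compl_biUnion_cyl_ae hf hϱ₀ hϱ₁ hsupp hss hppos hdisj n T)⟩
  · rintro s' _ ih
    show ∃ T : Finset (Fin n → Fin k), (⋃ i, s' i) =ᵐ[θ] ⋃ w ∈ T, cyl f n w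
    choose T hT using ih
    refine ⟨(Set.toFinite {w | ∃ i, w ∈ T i}).toFinset, ?_⟩
    have h1 : (⋃ i, s' i) =ᵐ[θ] ⋃ i, ⋃ w ∈ T i, cyl f n w :=
      EventuallyEq.countable_iUnion hT
    have h2 : (⋃ i, ⋃ w ∈ T i, cyl f n w)
        = ⋃ w ∈ (Set.toFinite {w | ∃ i, w ∈ T i}).toFinset, cyl f n w := by
      ext x
      simp only [Set.mem_iUnion, Set.Finite.mem_toFinset, Set.mem_setOf_eq, exists_prop]
      tauto
    rw [h2] at h1
    exact h1

end AEUnion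

end IfsAux

namespace IfsAux

variable {d k : ℕ} {ϱ : ℝ} {y : Fin k → EuclideanSpace ℝ (Fin d)}
  {f : Fin k → EuclideanSpace ℝ (Fin d) → EuclideanSpace ℝ (Fin d)}
  {θ : Measure (EuclideanSpace ℝ (Fin d))} [IsProbabilityMeasure θ]
  {p : Fin k → ENNReal}

section Condexp
variable [Nonempty (Fin k)]
variable (hf : ∀ i x, f i x = ϱ • x + y i) (hϱ₀ : 0 < |ϱ|) (hϱ₁ : |ϱ| < 1)
  (hsupp : θ (Set.range (ifsCod f))ᶜ = 0)
  (hss : θ = ∑ i : Fin k, p i • θ.map (f i)) (hppos : ∀ i, 0 < p i)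
  (hdisj : ∀ i j : Fin k, i ≠ j →
    θ (f i '' Set.range (ifsCod f) ∩ f j '' Set.range (ifsCod f)) = 0)
include hf hϱ₀ hϱ₁ hsupp hss hppos hdisj

lemma integral_cyl_eq (B : Set (EuclideanSpace ℝ (Fin d))) (hB : MeasurableSet B)
    (n : ℕ) (w : Fin n → Fin k) :
    ∫ x in cyl f n w, (∑ w' : Fin n → Fin k,
        (θ (B ∩ cyl f n w') / θ (cyl f n w')).toReal *
          (cyl f n w').indicator (fun _ => (1:ℝ)) x) ∂θ
    = ∫ x in cyl f n w,
        (B ∩ Set.range (ifsCod f)).indicator (fun _ => (1:ℝ)) x ∂θ := by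
  have hKm := measurableSet_K hf hϱ₀ hϱ₁
  have hindic : ∀ w' : Fin n → Fin k,
      ∫ x in cyl f n w, ((θ (B ∩ cyl f n w') / θ (cyl f n w')).toReal *
        (cyl f n w').indicator (fun _ => (1:ℝ)) x) ∂θ
      = (θ (B ∩ cyl f n w') / θ (cyl f n w')).toReal
          * (θ (cyl f n w ∩ cyl f n w')).toReal := by
    intro w'
    rw [integral_const_mul, setIntegral_indicator (measurableSet_cyl hf hϱ₀ hϱ₁ n w'),
      setIntegral_const, smul_eq_mul, mul_one]
    rfl
  have hcylK : cyl f n w ∩ (B ∩ Set.range (ifsCod f)) = B ∩ cyl f n w := by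
    ext x
    constructor
    · rintro ⟨h1, h2, _⟩; exact ⟨h2, h1⟩
    · rintro ⟨h1, h2⟩; exact ⟨h2, h1, cyl_subset_K hf hϱ₁ n w h2⟩
  calc ∫ x in cyl f n w, (∑ w' : Fin n → Fin k,
        (θ (B ∩ cyl f n w') / θ (cyl f n w')).toReal *
          (cyl f n w').indicator (fun _ => (1:ℝ)) x) ∂θ
      = ∑ w' : Fin n → Fin k, ∫ x in cyl f n w,
          ((θ (B ∩ cyl f n w') / θ (cyl f n w')).toReal *
            (cyl f n w').indicator (fun _ => (1:ℝ)) x) ∂θ :=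
        integral_finset_sum _ fun w' _ =>
          (((integrable_const (1:ℝ)).indicator
            (measurableSet_cyl hf hϱ₀ hϱ₁ n w')).const_mul _).integrableOn
    _ = ∑ w' : Fin n → Fin k, (θ (B ∩ cyl f n w') / θ (cyl f n w')).toReal
          * (θ (cyl f n w ∩ cyl f n w')).toReal :=
        Finset.sum_congr rfl fun w' _ => hindic w'
    _ = (θ (B ∩ cyl f n w) / θ (cyl f n w)).toReal * (θ (cyl f n w)).toReal := by
        rw [Finset.sum_eq_single w]
        · rw [Set.inter_self]
        · intro w' _ hne
          rw [cyl_inter_null hf hϱ₀ hϱ₁ hsupp hss hppos hdisj (Ne.symm hne)]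
          simp
        · intro h; exact absurd (Finset.mem_univ w) h
    _ = (θ (B ∩ cyl f n w)).toReal := by
        rw [← ENNReal.toReal_mul, ENNReal.div_mul_cancel
          (ne_of_gt (measure_cyl_pos hf hϱ₀ hϱ₁ hsupp hss hppos n w))
          (measure_ne_top θ _)]
    _ = ∫ x in cyl f n w,
          (B ∩ Set.range (ifsCod f)).indicator (fun _ => (1:ℝ)) x ∂θ := by
        rw [setIntegral_indicator (hB.inter hKm), setIntegral_const, smul_eq_mul,
          mul_one, hcylK]
        rfl

lemma condexp_cyl (B : Set (EuclideanSpace ℝ (Fin d))) (hB : MeasurableSet B) (n : ℕ) :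
    (fun x => ∑ w : Fin n → Fin k, (θ (B ∩ cyl f n w) / θ (cyl f n w)).toReal *
        (cyl f n w).indicator (fun _ => (1:ℝ)) x)
      =ᵐ[θ] θ[(B ∩ Set.range (ifsCod f)).indicator (fun _ => (1:ℝ)) |
        MeasurableSpace.generateFrom (Set.range (cyl f n))] := by
  have hm : MeasurableSpace.generateFrom (Set.range (cyl f n))
      ≤ (inferInstance : MeasurableSpace (EuclideanSpace ℝ (Fin d))) :=
    MeasurableSpace.generateFrom_le (by
      rintro t ⟨w, rfl⟩; exact measurableSet_cyl hf hϱ₀ hϱ₁ n w)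
  haveI : IsFiniteMeasure (θ.trim hm) := isFiniteMeasure_trim hm
  have hgi : Integrable ((B ∩ Set.range (ifsCod f)).indicator (fun _ => (1:ℝ))) θ :=
    (integrable_const (1:ℝ)).indicator (hB.inter (measurableSet_K hf hϱ₀ hϱ₁))
  have hsum_int : Integrable (fun x => ∑ w : Fin n → Fin k,
      (θ (B ∩ cyl f n w) / θ (cyl f n w)).toReal *
        (cyl f n w).indicator (fun _ => (1:ℝ)) x) θ :=
    integrable_finset_sum _ fun w _ =>
      ((integrable_const (1:ℝ)).indicator (measurableSet_cyl hf hϱ₀ hϱ₁ n w)).const_mul _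
  refine ae_eq_condExp_of_forall_setIntegral_eq hm hgi
    (fun s _ _ => hsum_int.integrableOn) (fun s hsmeas _ => ?_) ?_
  · obtain ⟨T, hT⟩ := union_cyl_of_measurableSet hf hϱ₀ hϱ₁ hsupp hss hppos hdisj n hsmeas
    rw [setIntegral_congr_set hT, setIntegral_congr_set hT]
    have hco : (⋃ w ∈ T, cyl f n w) = ⋃ w : {w // w ∈ T}, cyl f n (w : Fin n → Fin k) := by
      ext x; simp
    rw [hco]
    have hd : Pairwise (Function.onFun (MeasureTheory.AEDisjoint θ)
        fun w : {w // w ∈ T} => cyl f n (w : Fin n → Fin k)) :=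
      fun w w' hne => cyl_inter_null hf hϱ₀ hϱ₁ hsupp hss hppos hdisj
        (fun h => hne (Subtype.ext h))
    have hmeas' : ∀ w : {w // w ∈ T},
        NullMeasurableSet (cyl f n (w : Fin n → Fin k)) θ :=
      fun w => (measurableSet_cyl hf hϱ₀ hϱ₁ n _).nullMeasurableSet
    rw [integral_iUnion_ae hmeas' hd hsum_int.integrableOn,
      integral_iUnion_ae hmeas' hd hgi.integrableOn]
    exact tsum_congr fun w =>
      integral_cyl_eq hf hϱ₀ hϱ₁ hsupp hss hppos hdisj B hB n (w : Fin n → Fin k)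
  · refine StronglyMeasurable.aestronglyMeasurable ?_
    refine Measurable.stronglyMeasurable ?_
    refine Finset.measurable_sum _ fun w _ => ?_
    exact (measurable_const.indicator
      (MeasurableSpace.measurableSet_generateFrom (Set.mem_range_self w))).const_mul _

end Condexp

end IfsAux


open IfsAux

/-- self-similar Lebesgue density theorem.  Let `θ` be a self-similar
Borel probability measure on the attractor `K` of a contracting affine IFS, with
`θ(f i K ∩ f j K) = 0` for `i ≠ j`.  Then for any Borel set `B`, for `θ`-a.e. `x ∈ B`,
writing `x = cod b` and `f^{(n)} = f_{b₀} ∘ ⋯ ∘ f_{b_{n-1}}`, we have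
`θ(B ∩ f^{(n)}(K)) / θ(f^{(n)}(K)) → 1`. -/
theorem ifs_self_similar_density {d k : ℕ} (ϱ : ℝ) (hϱ₀ : 0 < |ϱ|) (hϱ₁ : |ϱ| < 1)
    (y : Fin k → EuclideanSpace ℝ (Fin d))
    (f : Fin k → EuclideanSpace ℝ (Fin d) → EuclideanSpace ℝ (Fin d))
    (hf : ∀ i x, f i x = ϱ • x + y i)
    (K : Set (EuclideanSpace ℝ (Fin d))) (hK : K = Set.range (ifsCod f))
    (θ : Measure (EuclideanSpace ℝ (Fin d))) [IsProbabilityMeasure θ]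
    (hsupp : θ Kᶜ = 0)
    (p : Fin k → ENNReal) (hp : ∑ i, p i = 1) (hppos : ∀ i, 0 < p i)
    (hss : θ = ∑ i : Fin k, p i • θ.map (f i))
    (hdisj : ∀ i j : Fin k, i ≠ j → θ (f i '' K ∩ f j '' K) = 0)
    (B : Set (EuclideanSpace ℝ (Fin d))) (hB : MeasurableSet B) :
    ∀ᵐ x ∂θ, x ∈ B → ∀ b : ℕ → Fin k, ifsCod f b = x →
      Tendsto (fun n => θ (B ∩ ifsComp f b n '' K) / θ (ifsComp f b n '' K))
        atTop (nhds 1) := by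
  subst hK
  classical
  have hk0 : k ≠ 0 := by
    rintro rfl
    simp at hp
  haveI : Nonempty (Fin k) := ⟨⟨0, Nat.pos_of_ne_zero hk0⟩⟩
  -- the filtration of cylinder σ-algebras
  have hle : ∀ n, MeasurableSpace.generateFrom (Set.range (cyl f n))
      ≤ (inferInstance : MeasurableSpace (EuclideanSpace ℝ (Fin d))) := fun n =>
    MeasurableSpace.generateFrom_le (by
      rintro t ⟨w, rfl⟩; exact measurableSet_cyl hf hϱ₀ hϱ₁ n w)
  have hmono : Monotone (fun n => MeasurableSpace.generateFrom (Set.range (cyl f n))) := by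
    refine monotone_nat_of_le_succ fun n => ?_
    refine MeasurableSpace.generateFrom_le ?_
    rintro t ⟨w, rfl⟩
    rw [cyl_succ hf hϱ₁ n w]
    exact MeasurableSet.iUnion fun i =>
      MeasurableSpace.measurableSet_generateFrom (Set.mem_range_self (snocw w i))
  set F : Filtration ℕ (inferInstance : MeasurableSpace (EuclideanSpace ℝ (Fin d))) :=
    ⟨fun n => MeasurableSpace.generateFrom (Set.range (cyl f n)), hmono, hle⟩ with hF
  set g : EuclideanSpace ℝ (Fin d) → ℝ :=
    (B ∩ Set.range (ifsCod f)).indicator (fun _ => (1 : ℝ)) with hg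
  have hgint : Integrable g θ :=
    (integrable_const (1:ℝ)).indicator (hB.inter (measurableSet_K hf hϱ₀ hϱ₁))
  have hBK : MeasurableSet[⨆ n, F n] (B ∩ Set.range (ifsCod f)) :=
    inter_K_mem hf hϱ₀ hϱ₁ hB
  have hgsm : StronglyMeasurable[⨆ n, F n] g := stronglyMeasurable_const.indicator hBK
  have hlevy := hgint.tendsto_ae_condExp (ℱ := F) hgsm
  set H : ℕ → EuclideanSpace ℝ (Fin d) → ℝ := fun n x =>
    ∑ w : Fin n → Fin k, (θ (B ∩ cyl f n w) / θ (cyl f n w)).toReal *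
      (cyl f n w).indicator (fun _ => (1:ℝ)) x with hH
  have hcondall : ∀ᵐ x ∂θ, ∀ n, H n x = (θ[g|F n]) x :=
    ae_all_iff.2 fun n => condexp_cyl hf hϱ₀ hϱ₁ hsupp hss hppos hdisj B hB n
  have hbadnull : θ (badSet f) = 0 :=
    measure_badSet hf hϱ₀ hϱ₁ hsupp hss hppos hdisj
  have hbad : ∀ᵐ x ∂θ, x ∉ badSet f := compl_mem_ae_iff.2 hbadnull
  filter_upwards [hlevy, hcondall, hbad] with x hx1 hx2 hx3
  intro hxB b hcodb
  have hxK : x ∈ Set.range (ifsCod f) := hcodb ▸ Set.mem_range_self b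
  have hgx1 : g x = 1 := by
    rw [hg]
    exact Set.indicator_of_mem (Set.mem_inter hxB hxK) _
  have hHt : Tendsto (fun n => H n x) atTop (nhds 1) := by
    have heq : (fun n => H n x) = fun n => (θ[g|F n]) x := funext fun n => hx2 n
    rw [heq, ← hgx1]
    exact hx1
  have hcylx : ∀ n, x ∈ cyl f n (fun j : Fin n => b j) := fun n => by
    rw [← cyl_eq]
    exact hcodb ▸ ifsCod_mem hf hϱ₁ b n
  have hHval : ∀ n, H n x
      = (θ (B ∩ ifsComp f b n '' Set.range (ifsCod f))
          / θ (ifsComp f b n '' Set.range (ifsCod f))).toReal := by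
    intro n
    simp only [hH]
    rw [Finset.sum_eq_single (fun j : Fin n => b j)]
    · rw [Set.indicator_of_mem (hcylx n), mul_one, cyl_eq]
    · intro w _ hwne
      have hnx : x ∉ cyl f n w := by
        intro hxw
        apply hwne
        have hagree := coding_unique hf hϱ₀ hϱ₁ hx3 (wext w) b n hxw
          (hcodb ▸ ifsCod_mem hf hϱ₁ b n)
        funext i
        have := hagree i i.isLt
        simpa [wext] using this
      rw [Set.indicator_of_notMem hnx, mul_zero]
    · intro h; exact absurd (Finset.mem_univ _) h
  have hpos : ∀ n, 0 < θ (ifsComp f b n '' Set.range (ifsCod f)) := fun n =>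
    measure_ifsComp_image_pos hf hss hϱ₀ hppos b n (measurableSet_K hf hϱ₀ hϱ₁)
      (by rw [measure_K_eq_one hf hϱ₀ hϱ₁ hsupp]; exact one_pos)
  have hfin : ∀ n, θ (B ∩ ifsComp f b n '' Set.range (ifsCod f))
      / θ (ifsComp f b n '' Set.range (ifsCod f)) ≠ ⊤ := fun n =>
    (ENNReal.div_lt_top (measure_ne_top θ _) (ne_of_gt (hpos n))).ne
  have hHt' : Tendsto (fun n => (θ (B ∩ ifsComp f b n '' Set.range (ifsCod f))
      / θ (ifsComp f b n '' Set.range (ifsCod f))).toReal) atTop (nhds 1) := by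
    have : (fun n => H n x) = fun n => (θ (B ∩ ifsComp f b n '' Set.range (ifsCod f))
        / θ (ifsComp f b n '' Set.range (ifsCod f))).toReal := funext hHval
    rwa [this] at hHt
  have h1top : (1 : ENNReal) ≠ ⊤ := by simp
  have := (ENNReal.tendsto_toReal_iff hfin h1top).1 (by simpa using hHt')
  exact this
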